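/- Let (H,H⁺,u) be a simple dimension group with unit arising as the direct limit of Z → Z^{k_1} → Z^{k_2} → ⋯ with strictly positive transition matrices A_n and unit u = [1,0]. Define modified matrices Ã_n by duplicating the first row of A_n (more precisely: Ã_n has first column all 1's, second column A_n(·,1) − 1 with the first row repeated, and remaining columns A_n(·,j) with the first row repeated). Then (H,H⁺,u) is isomorphic as a unital ordered group to the direct limit Z → Z^{k_1+1} → Z^{k_2+1} → ⋯ with transition matrices Ã_n. -/

import Mathlib

noncomputable section

/-- The single-step homomorphism `ℤ^{k n} → ℤ^{k (n+1)}`, `v ↦ M n • v`. -/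
def stepHom (k : ℕ → ℕ) (M : ∀ n, Matrix (Fin (k (n + 1))) (Fin (k n)) ℤ) (n : ℕ) :
    (Fin (k n) → ℤ) →+ (Fin (k (n + 1)) → ℤ) :=
  (M n).mulVecLin.toAddMonoidHom

/-- The transition homomorphisms of the directed system `(ℤ^{k n}, M n)`. -/
def sysHom (k : ℕ → ℕ) (M : ∀ n, Matrix (Fin (k (n + 1))) (Fin (k n)) ℤ) :
    ∀ i j : ℕ, i ≤ j → (Fin (k i) → ℤ) →+ (Fin (k j) → ℤ) :=
  fun _ _ h => Nat.leRecOn h (fun {m} g => (stepHom k M m).comp g) (AddMonoidHom.id _)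

/-- The direct limit `H = lim→ (ℤ^{k n}, M n)`. -/
abbrev DimGroup (k : ℕ → ℕ) (M : ∀ n, Matrix (Fin (k (n + 1))) (Fin (k n)) ℤ) : Type _ :=
  AddCommGroup.DirectLimit (fun n => Fin (k n) → ℤ) (sysHom k M)

/-- The canonical map `[·, n] : ℤ^{k n} → H`. -/
abbrev dgOf (k : ℕ → ℕ) (M : ∀ n, Matrix (Fin (k (n + 1))) (Fin (k n)) ℤ) (n : ℕ) :
    (Fin (k n) → ℤ) →+ DimGroup k M :=
  AddCommGroup.DirectLimit.of (fun n => Fin (k n) → ℤ) (sysHom k M) n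

/-- The positive cone `H⁺ = {[v,n] : v ∈ (ℤ⁺)^{k n}}`. -/
def posCone (k : ℕ → ℕ) (M : ∀ n, Matrix (Fin (k (n + 1))) (Fin (k n)) ℤ) :
    Set (DimGroup k M) :=
  {h | ∃ (n : ℕ) (v : Fin (k n) → ℤ), (∀ i, 0 ≤ v i) ∧ h = dgOf k M n v}

/-- Dimensions of the modified system: `k 0, k 1 + 1, k 2 + 1, …`. -/
def dimAux (d : ℕ → ℕ) : ℕ → ℕ
  | 0 => d 0
  | n + 1 => d (n + 1) + 1

/-- The row-index map duplicating the first row: `0,1 ↦ 0` and `i+1 ↦ i`. -/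
def collapse {m : ℕ} (hm : 0 < m) (i : Fin (m + 1)) : Fin m :=
  ⟨i.val - 1, by have := i.2; omega⟩

/-- The modified matrices `Ã n`: the first row of `A n` is duplicated, the first
column consists of `1`'s, the second column is `A n (·,1) - 1`, and the remaining
columns are those of `A n`.  (`Ã 0` is the `(k 1 + 1) × 1` matrix obtained from
`A 0` by duplicating its first row.) -/
def tildeMat (d : ℕ → ℕ) (hd : ∀ n, 0 < d n)
    (A : ∀ n, Matrix (Fin (d (n + 1))) (Fin (d n)) ℤ) :
    ∀ n, Matrix (Fin (dimAux d (n + 1))) (Fin (dimAux d n)) ℤ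
  | 0 => Matrix.of fun i j => A 0 (collapse (hd 1) i) j
  | n + 1 => Matrix.of fun i j =>
      if j.val = 0 then 1
      else A (n + 1) (collapse (hd (n + 2)) i) (collapse (hd (n + 1)) j)
        - (if j.val = 1 then 1 else 0)

open Matrix

attribute [reducible] dimAux

section SysLemmas

variable (k : ℕ → ℕ) (M : ∀ n, Matrix (Fin (k (n + 1))) (Fin (k n)) ℤ)

lemma sysHom_self (n : ℕ) (x : Fin (k n) → ℤ) : sysHom k M n n le_rfl x = x := by
  have h : sysHom k M n n le_rfl = AddMonoidHom.id _ := Nat.leRecOn_self _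
  rw [h]; rfl

lemma sysHom_succ {i j : ℕ} (h : i ≤ j) (h2 : i ≤ j + 1) (x : Fin (k i) → ℤ) :
    sysHom k M i (j + 1) h2 x = M j *ᵥ (sysHom k M i j h x) := by
  have h' : sysHom k M i (j + 1) h2 = (stepHom k M j).comp (sysHom k M i j h) :=
    Nat.leRecOn_succ h _
  rw [h']; rfl

lemma sysHom_compat {P : Type*} [AddCommMonoid P]
    (g : ∀ n, (Fin (k n) → ℤ) →+ P)
    (hg : ∀ n x, g (n + 1) (M n *ᵥ x) = g n x) :
    ∀ (i j : ℕ) (h : i ≤ j) (x : Fin (k i) → ℤ), g j (sysHom k M i j h x) = g i x := by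
  intro i j h
  induction j, h using Nat.le_induction with
  | base => intro x; rw [sysHom_self]
  | succ j hj ih =>
    intro x
    rw [sysHom_succ k M hj, hg, ih]

lemma dgOf_step (n : ℕ) (x : Fin (k n) → ℤ) :
    dgOf k M (n + 1) (M n *ᵥ x) = dgOf k M n x := by
  have h := AddCommGroup.DirectLimit.of_f (G := fun n => Fin (k n) → ℤ) (f := sysHom k M)
      (Nat.le_succ n) x
  rwa [sysHom_succ k M le_rfl, sysHom_self] at h

end SysLemmas

section Mats

variable (d : ℕ → ℕ) (hd : ∀ n, 0 < d n)
  (A : ∀ n, Matrix (Fin (d (n + 1))) (Fin (d n)) ℤ)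

/-- The duplicate-first-coordinate matrices. -/
def Mmat : ∀ n, Matrix (Fin (dimAux d n)) (Fin (d n)) ℤ
  | 0 => Matrix.of fun i j => if i = j then 1 else 0
  | n + 1 => Matrix.of fun i j => if collapse (hd (n + 1)) i = j then 1 else 0

/-- The intermediate matrices. -/
def Bmat : ∀ n, Matrix (Fin (d (n + 1))) (Fin (dimAux d n)) ℤ
  | 0 => Matrix.of fun i j => A 0 i j
  | n + 1 => Matrix.of fun i j =>
      if (j : ℕ) = 0 then 1
      else A (n + 1) i (collapse (hd (n + 1)) j) - (if (j : ℕ) = 1 then 1 else 0)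

lemma collapse_zero {m : ℕ} (hm : 0 < m) : collapse hm 0 = ⟨0, hm⟩ := by
  simp [collapse]

lemma collapse_succ {m : ℕ} (hm : 0 < m) (l : Fin m) : collapse hm l.succ = l := by
  simp [collapse]

lemma Mmat_nonneg (n : ℕ) (i : Fin (dimAux d n)) (j : Fin (d n)) : 0 ≤ Mmat d hd n i j := by
  cases n <;> · simp only [Mmat, Matrix.of_apply]; split <;> norm_num

lemma Bmat_nonneg (hpos : ∀ n i j, 0 < A n i j) (n : ℕ) (i : Fin (d (n + 1)))
    (j : Fin (dimAux d n)) : 0 ≤ Bmat d hd A n i j := by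
  cases n with
  | zero => exact (hpos 0 i j).le
  | succ n =>
    simp only [Bmat, Matrix.of_apply]
    have := hpos (n + 1) i (collapse (hd (n + 1)) j)
    split_ifs <;> omega

lemma BM_eq (n : ℕ) : Bmat d hd A n * Mmat d hd n = A n := by
  cases n with
  | zero =>
    ext i j
    simp [Matrix.mul_apply, Bmat, Mmat, mul_ite, mul_one, mul_zero]
  | succ n =>
    ext i j
    rw [Matrix.mul_apply]
    show ∑ l : Fin (d (n + 1) + 1), Bmat d hd A (n + 1) i l * Mmat d hd (n + 1) l j
        = A (n + 1) i j
    rw [Fin.sum_univ_succ]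
    simp only [Bmat, Mmat, Matrix.of_apply, collapse_succ, collapse_zero, Fin.val_succ,
      Fin.val_zero, mul_ite, mul_one, mul_zero, ite_mul, one_mul, zero_mul,
      Finset.sum_ite_eq', Finset.mem_univ, if_true]
    have hj : (⟨0, hd (n + 1)⟩ : Fin (d (n + 1))) = j ↔ (j : ℕ) = 0 := by
      rw [Fin.ext_iff]; exact eq_comm
    by_cases h : (j : ℕ) = 0 <;> simp [hj, h]

lemma MB_eq (n : ℕ) : Mmat d hd (n + 1) * Bmat d hd A n = tildeMat d hd A n := by
  cases n with
  | zero =>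
    ext i j
    rw [Matrix.mul_apply]
    simp [Mmat, Bmat, tildeMat, ite_mul, one_mul, zero_mul, Finset.sum_ite_eq,
      Finset.mem_univ, if_true]
  | succ n =>
    ext i j
    rw [Matrix.mul_apply]
    simp [Mmat, Bmat, tildeMat, ite_mul, one_mul, zero_mul, Finset.sum_ite_eq,
      Finset.mem_univ, if_true]

end Mats

section Homs

variable (d : ℕ → ℕ) (hd : ∀ n, 0 < d n)
  (A : ∀ n, Matrix (Fin (d (n + 1))) (Fin (d n)) ℤ)

lemma key1 (n : ℕ) (v : Fin (d n) → ℤ) :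
    Bmat d hd A n *ᵥ (Mmat d hd n *ᵥ v) = A n *ᵥ v := by
  rw [Matrix.mulVec_mulVec, BM_eq]

lemma key2 (n : ℕ) (w : Fin (dimAux d n) → ℤ) :
    Mmat d hd (n + 1) *ᵥ (Bmat d hd A n *ᵥ w) = tildeMat d hd A n *ᵥ w := by
  rw [Matrix.mulVec_mulVec, MB_eq]

lemma fwd_compat (n : ℕ) (x : Fin (d n) → ℤ) :
    dgOf (dimAux d) (tildeMat d hd A) (n + 1) (Mmat d hd (n + 1) *ᵥ (A n *ᵥ x)) =
      dgOf (dimAux d) (tildeMat d hd A) n (Mmat d hd n *ᵥ x) := by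
  rw [← key1, key2, dgOf_step]

lemma bwd_compat (n : ℕ) (x : Fin (dimAux d n) → ℤ) :
    dgOf d A (n + 2) (Bmat d hd A (n + 1) *ᵥ (tildeMat d hd A n *ᵥ x)) =
      dgOf d A (n + 1) (Bmat d hd A n *ᵥ x) := by
  rw [← key2, key1, dgOf_step]

/-- The forward homomorphism. -/
def fwdHom : DimGroup d A →+ DimGroup (dimAux d) (tildeMat d hd A) :=
  AddCommGroup.DirectLimit.lift _ _ _
    (fun n => (dgOf (dimAux d) (tildeMat d hd A) n).comp (Mmat d hd n).mulVecLin.toAddMonoidHom)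
    (sysHom_compat d A _ (fun n x => fwd_compat d hd A n x))

/-- The backward homomorphism. -/
def bwdHom : DimGroup (dimAux d) (tildeMat d hd A) →+ DimGroup d A :=
  AddCommGroup.DirectLimit.lift _ _ _
    (fun n => (dgOf d A (n + 1)).comp (Bmat d hd A n).mulVecLin.toAddMonoidHom)
    (sysHom_compat (dimAux d) (tildeMat d hd A) _ (fun n x => bwd_compat d hd A n x))

set_option maxHeartbeats 2000000 in
lemma fwdHom_of (n : ℕ) (v : Fin (d n) → ℤ) :
    fwdHom d hd A (dgOf d A n v) =
      dgOf (dimAux d) (tildeMat d hd A) n (Mmat d hd n *ᵥ v) := by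
  unfold fwdHom
  exact AddCommGroup.DirectLimit.lift_of (P := DimGroup (dimAux d) (tildeMat d hd A))
    (g := fun n => (dgOf (dimAux d) (tildeMat d hd A) n).comp
      (Mmat d hd n).mulVecLin.toAddMonoidHom)
    (Hg := sysHom_compat d A _ (fun n x => fwd_compat d hd A n x)) n v

set_option maxHeartbeats 2000000 in
lemma bwdHom_of (n : ℕ) (w : Fin (dimAux d n) → ℤ) :
    bwdHom d hd A (dgOf (dimAux d) (tildeMat d hd A) n w) =
      dgOf d A (n + 1) (Bmat d hd A n *ᵥ w) := by
  unfold bwdHom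
  exact AddCommGroup.DirectLimit.lift_of (P := DimGroup d A)
    (g := fun n => (dgOf d A (n + 1)).comp (Bmat d hd A n).mulVecLin.toAddMonoidHom)
    (Hg := sysHom_compat (dimAux d) (tildeMat d hd A) _ (fun n x => bwd_compat d hd A n x)) n w

lemma mulVec_nonneg {m n : ℕ} (M : Matrix (Fin m) (Fin n) ℤ) (v : Fin n → ℤ)
    (hM : ∀ i j, 0 ≤ M i j) (hv : ∀ j, 0 ≤ v j) (i : Fin m) : 0 ≤ (M *ᵥ v) i := by
  rw [Matrix.mulVec, dotProduct]
  exact Finset.sum_nonneg fun j _ => mul_nonneg (hM i j) (hv j)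

end Homs

theorem stmt6 (d : ℕ → ℕ) (hd0 : d 0 = 1) (hd : ∀ n, 0 < d n)
    (A : ∀ n, Matrix (Fin (d (n + 1))) (Fin (d n)) ℤ)
    (hpos : ∀ n i j, 0 < A n i j) :
    ∃ e : DimGroup d A ≃+ DimGroup (dimAux d) (tildeMat d hd A),
      e '' posCone d A = posCone (dimAux d) (tildeMat d hd A) ∧
      e (dgOf d A 0 (fun _ => 1)) =
        dgOf (dimAux d) (tildeMat d hd A) 0 (fun _ => 1) := by
  have hli : ∀ z, bwdHom d hd A (fwdHom d hd A z) = z := by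
    intro z
    induction z using AddCommGroup.DirectLimit.induction_on with
    | ih n v =>
      rw [fwdHom_of, bwdHom_of, key1, dgOf_step]
  have hri : ∀ z, fwdHom d hd A (bwdHom d hd A z) = z := by
    intro z
    induction z using AddCommGroup.DirectLimit.induction_on with
    | ih n w =>
      rw [bwdHom_of, fwdHom_of, key2, dgOf_step]
  refine ⟨⟨⟨fwdHom d hd A, bwdHom d hd A, hli, hri⟩, (fwdHom d hd A).map_add⟩, ?_, ?_⟩
  · ext z
    constructor
    · rintro ⟨x, ⟨n, v, hv, rfl⟩, rfl⟩
      refine ⟨n, Mmat d hd n *ᵥ v, ?_, fwdHom_of d hd A n v⟩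
      exact mulVec_nonneg _ _ (Mmat_nonneg d hd n) hv
    · rintro ⟨n, w, hw, rfl⟩
      refine ⟨dgOf d A (n + 1) (Bmat d hd A n *ᵥ w), ⟨n + 1, _, ?_, rfl⟩, ?_⟩
      · exact mulVec_nonneg _ _ (Bmat_nonneg d hd A hpos n) hw
      · show fwdHom d hd A _ = _
        rw [fwdHom_of, key2, dgOf_step]
  · show fwdHom d hd A _ = _
    rw [fwdHom_of]
    congr 1
    funext i
    simp [Mmat, Matrix.mulVec, dotProduct, mul_ite, mul_one, mul_zero]
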